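/- Let k ≥ 3 and let G be an [n,k,d]_q A^sMDS code with n = (s+1)(q+1)+k−2 (length-maximal). Then for each 0 ≤ j ≤ k−2, the quantity γ_j = C(n−j, k−1−j) / C(n−d−j, k−1−j) is an integer, where C denotes the binomial coefficient. -/

import Mathlib

/-- The number of points (with multiplicity) of the projective system `G`
lying on the hyperplane `ker φ`. -/
noncomputable def hypCount {F : Type*} [Field F] [DecidableEq F] {n k : ℕ}
    (G : Fin n → Fin k → F) (φ : (Fin k → F) →ₗ[F] F) : ℕ :=
  (Finset.univ.filter fun i => φ (G i) = 0).card

/-- `G` is (the projective system of) a non-degenerate linear `[n,k,d]_q` code: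
an `n`-multiset of nonzero points spanning `PG(k-1,q)`, every hyperplane containing
at most `n - d` points, and some hyperplane (a secant) containing exactly `n - d`. -/
def IsCodePS (F : Type*) [Field F] [DecidableEq F] (n k d : ℕ)
    (G : Fin n → Fin k → F) : Prop :=
  0 < d ∧ (∀ i, G i ≠ 0) ∧ Submodule.span F (Set.range G) = ⊤ ∧
  (∀ φ : (Fin k → F) →ₗ[F] F, φ ≠ 0 → hypCount G φ + d ≤ n) ∧
  (∃ φ : (Fin k → F) →ₗ[F] F, φ ≠ 0 ∧ hypCount G φ + d = n)

section Aux

set_option linter.unusedSectionVars false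

open Finset Module Submodule

variable {F : Type*} [Field F] [Fintype F] [DecidableEq F]

lemma line_count (x y : F) (hxy : ¬ (x = 0 ∧ y = 0)) :
    ((Finset.univ : Finset (F × F)).filter fun p => p.1 * x + p.2 * y = 0).card
      = Fintype.card F := by
  rcases eq_or_ne x 0 with hx | hx
  · have hy : y ≠ 0 := fun h => hxy ⟨hx, h⟩
    subst hx
    have himg : ((Finset.univ : Finset (F × F)).filter fun p => p.1 * 0 + p.2 * y = 0)
        = (Finset.univ : Finset F).image (fun a => ((a, 0) : F × F)) := by
      ext p
      simp only [mem_filter, mem_univ, true_and, mem_image, mul_zero, zero_add]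
      constructor
      · intro h
        exact ⟨p.1, Prod.ext rfl ((mul_eq_zero.1 h).resolve_right hy).symm⟩
      · rintro ⟨a, rfl⟩; simp
    rw [himg, Finset.card_image_of_injective _ (fun a b h => (Prod.ext_iff.1 h).1),
      Finset.card_univ]
  · have himg : ((Finset.univ : Finset (F × F)).filter fun p => p.1 * x + p.2 * y = 0)
        = (Finset.univ : Finset F).image (fun b => ((-(b * y) * x⁻¹, b) : F × F)) := by
      ext p
      simp only [mem_filter, mem_univ, true_and, mem_image]
      constructor
      · intro h
        refine ⟨p.2, Prod.ext ?_ rfl⟩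
        field_simp
        linear_combination -h
      · rintro ⟨b, rfl⟩
        field_simp
        ring
    rw [himg, Finset.card_image_of_injective _ (fun a b h => (Prod.ext_iff.1 h).2),
      Finset.card_univ]

lemma line_count_erase (x y : F) :
    (((Finset.univ : Finset (F × F)).erase 0).filter fun p => p.1 * x + p.2 * y = 0).card
      = if x = 0 ∧ y = 0 then Fintype.card F * Fintype.card F - 1 else Fintype.card F - 1 := by
  rw [Finset.filter_erase, Finset.card_erase_of_mem (by simp)]
  by_cases hxy : x = 0 ∧ y = 0
  · rw [if_pos hxy]
    obtain ⟨rfl, rfl⟩ := hxy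
    simp [Finset.filter_true_of_mem, Finset.card_univ, Fintype.card_prod]
  · rw [if_neg hxy, line_count x y hxy]

lemma pencil_sum {n k : ℕ} (G : Fin n → Fin k → F) (Φ : Fin 2 → ((Fin k → F) →ₗ[F] F)) :
    ∑ p ∈ (Finset.univ : Finset (F × F)).erase 0, hypCount G (p.1 • Φ 0 + p.2 • Φ 1)
      = (Finset.univ.filter fun i => Φ 0 (G i) = 0 ∧ Φ 1 (G i) = 0).card
          * (Fintype.card F * Fintype.card F - 1)
        + (n - (Finset.univ.filter fun i => Φ 0 (G i) = 0 ∧ Φ 1 (G i) = 0).card)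
          * (Fintype.card F - 1) := by
  have h1 : ∀ p : F × F, hypCount G (p.1 • Φ 0 + p.2 • Φ 1)
      = ∑ i : Fin n, if p.1 * Φ 0 (G i) + p.2 * Φ 1 (G i) = 0 then 1 else 0 := by
    intro p
    rw [hypCount, Finset.card_filter]
    simp [LinearMap.add_apply, LinearMap.smul_apply, smul_eq_mul]
  simp only [h1]
  rw [Finset.sum_comm]
  have h2 : ∀ i : Fin n,
      (∑ p ∈ (Finset.univ : Finset (F × F)).erase 0,
        if p.1 * Φ 0 (G i) + p.2 * Φ 1 (G i) = 0 then 1 else 0)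
      = if Φ 0 (G i) = 0 ∧ Φ 1 (G i) = 0 then Fintype.card F * Fintype.card F - 1
        else Fintype.card F - 1 := by
    intro i
    rw [← line_count_erase (Φ 0 (G i)) (Φ 1 (G i)), Finset.card_filter]
  simp only [h2]
  rw [Finset.sum_ite, Finset.sum_const, Finset.sum_const, smul_eq_mul, smul_eq_mul]
  congr 1
  congr 1
  have := Finset.card_filter_add_card_filter_not
    (s := (Finset.univ : Finset (Fin n)))
    (p := fun i => Φ 0 (G i) = 0 ∧ Φ 1 (G i) = 0)
  simp only [Finset.card_univ, Fintype.card_fin] at this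
  omega

lemma nonzero_comb {k : ℕ} {Φ : Fin 2 → ((Fin k → F) →ₗ[F] F)}
    (hΦ : LinearIndependent F Φ) {p : F × F} (hp : p ≠ 0) :
    p.1 • Φ 0 + p.2 • Φ 1 ≠ 0 := by
  intro h
  have := (Fintype.linearIndependent_iff.1 hΦ) ![p.1, p.2] (by
    rw [Fin.sum_univ_two]; simpa using h)
  exact hp (Prod.ext (this 0) (this 1))

lemma pencil_card_le {n k d s : ℕ} (G : Fin n → Fin k → F)
    (hk : 3 ≤ k) (hG : IsCodePS F n k d G) (hs : d + k + s = n + 1)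
    (hmax : n + 2 = (s + 1) * (Fintype.card F + 1) + k)
    (Φ : Fin 2 → ((Fin k → F) →ₗ[F] F)) (hΦ : LinearIndependent F Φ) :
    (Finset.univ.filter fun i => Φ 0 (G i) = 0 ∧ Φ 1 (G i) = 0).card ≤ k - 2 := by
  set q := Fintype.card F with hqdef
  have hq : 2 ≤ q := Fintype.one_lt_card
  set a := (Finset.univ.filter fun i => Φ 0 (G i) = 0 ∧ Φ 1 (G i) = 0).card with ha
  have han : a ≤ n := by
    calc a ≤ (Finset.univ : Finset (Fin n)).card := Finset.card_filter_le _ _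
    _ = n := by simp
  have hub : ∑ p ∈ (Finset.univ : Finset (F × F)).erase 0,
      hypCount G (p.1 • Φ 0 + p.2 • Φ 1) ≤ (q * q - 1) * (n - d) := by
    have hcard : ((Finset.univ : Finset (F × F)).erase 0).card = q * q - 1 := by
      rw [Finset.card_erase_of_mem (Finset.mem_univ _), Finset.card_univ,
        Fintype.card_prod]
    calc ∑ p ∈ (Finset.univ : Finset (F × F)).erase 0,
          hypCount G (p.1 • Φ 0 + p.2 • Φ 1)
        ≤ ∑ _p ∈ (Finset.univ : Finset (F × F)).erase 0, (n - d) := by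
          apply Finset.sum_le_sum
          intro p hp
          have hpne : p ≠ 0 := Finset.ne_of_mem_erase hp
          have := hG.2.2.2.1 _ (nonzero_comb hΦ hpne)
          omega
      _ = (q * q - 1) * (n - d) := by rw [Finset.sum_const, hcard, smul_eq_mul]
  rw [pencil_sum] at hub
  rw [← ha] at hub; simp only [← hqdef] at hub
  -- now pure arithmetic
  by_contra hcon
  have hak : k - 1 ≤ a := by omega
  have hd : d ≤ n := by omega
  have hq2 : 1 ≤ q * q := by nlinarith
  zify [han, hd, hq, hq2, Nat.one_le_iff_ne_zero.2 (by positivity : q ≠ 0)] at hub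
  have hakZ : (k : ℤ) - 1 ≤ a := by
    have : ((k : ℤ) - 1) = ((k - 1 : ℕ) : ℤ) := by omega
    rw [this]; exact_mod_cast hak
  have hmaxZ : (n : ℤ) + 2 = (s + 1) * (q + 1) + k := by exact_mod_cast hmax
  have hsZ : (d : ℤ) + k + s = n + 1 := by exact_mod_cast hs
  have hqZ : (2 : ℤ) ≤ q := by exact_mod_cast hq
  have hkZ : (3 : ℤ) ≤ k := by exact_mod_cast hk
  have h1 : ((q : ℤ) - 1) * (n + a * q) ≤ (q - 1) * ((q + 1) * (k + s - 1)) := by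
    calc ((q : ℤ) - 1) * (n + a * q)
        = a * (q * q - 1) + (n - a) * (q - 1) := by ring
      _ ≤ (q * q - 1) * (n - d) := hub
      _ = (q - 1) * ((q + 1) * (k + s - 1)) := by
          have : (n : ℤ) - d = k + s - 1 := by linarith
          rw [this]; ring
  have h2 : (n : ℤ) + a * q ≤ (q + 1) * (k + s - 1) :=
    le_of_mul_le_mul_left h1 (by linarith)
  nlinarith [mul_le_mul_of_nonneg_right hakZ (by linarith : (0:ℤ) ≤ q)]

lemma ann_finrank {k : ℕ} (W : Submodule F (Fin k → F)) :
    finrank F W + finrank F W.dualAnnihilator = k := by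
  have e : finrank F ((Fin k → F) ⧸ W) = finrank F W.dualAnnihilator :=
    (Subspace.quotEquivAnnihilator W).finrank_eq
  have h := Submodule.finrank_quotient_add_finrank W
  rw [Module.finrank_fin_fun] at h
  omega

lemma exists_two_indep {k : ℕ} (A : Submodule F ((Fin k → F) →ₗ[F] F))
    (hA : 2 ≤ finrank F A) :
    ∃ Φ : Fin 2 → ((Fin k → F) →ₗ[F] F), LinearIndependent F Φ ∧ ∀ i, Φ i ∈ A := by
  haveI : Module.Free F A := Module.Free.of_divisionRing F A
  let b := Module.finBasis F A
  refine ⟨fun i => (b (Fin.castLE hA i) : A), ?_, fun i => (b _).2⟩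
  have li := b.linearIndependent.comp (Fin.castLE hA) (Fin.castLE_injective hA)
  exact li.map_of_injective_injectiveₛ id A.subtype.toAddMonoidHom Function.injective_id
    A.injective_subtype (fun _ _ => rfl)

lemma points_indep {n k d s : ℕ} (G : Fin n → Fin k → F)
    (hk : 3 ≤ k) (hG : IsCodePS F n k d G) (hs : d + k + s = n + 1)
    (hmax : n + 2 = (s + 1) * (Fintype.card F + 1) + k)
    (t : Finset (Fin n)) (ht : t.card = k - 1) :
    LinearIndependent F (fun i : t => G i) := by
  by_contra hdep
  set V := Submodule.span F (Set.range (fun i : t => G i)) with hV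
  have hle : finrank F V ≤ k - 2 := by
    have h1 := finrank_range_le_card (R := F) (fun i : t => G i)
    rw [Fintype.card_coe, ht] at h1
    have h2 : finrank F V ≠ k - 1 := by
      intro h
      exact hdep (linearIndependent_iff_card_eq_finrank_span.2
        (by rw [Fintype.card_coe, ht]; exact h.symm))
    have : (Set.range fun i : t => G i).finrank F = finrank F V := rfl
    omega
  have hann : 2 ≤ finrank F V.dualAnnihilator := by
    have := ann_finrank V
    omega
  obtain ⟨Φ, hΦ, hmem⟩ := exists_two_indep V.dualAnnihilator hann
  have hsub : t ⊆ Finset.univ.filter fun i => Φ 0 (G i) = 0 ∧ Φ 1 (G i) = 0 := by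
    intro i hi
    have hGi : G i ∈ V := Submodule.subset_span ⟨⟨i, hi⟩, rfl⟩
    simp only [Finset.mem_filter, Finset.mem_univ, true_and]
    exact ⟨(Submodule.mem_dualAnnihilator _).1 (hmem 0) _ hGi,
      (Submodule.mem_dualAnnihilator _).1 (hmem 1) _ hGi⟩
  have := Finset.card_le_card hsub
  have := pencil_card_le G hk hG hs hmax Φ hΦ
  omega

lemma exists_basis_two {k : ℕ} (A : Submodule F ((Fin k → F) →ₗ[F] F))
    (hA : finrank F A = 2) :
    ∃ Φ : Fin 2 → ((Fin k → F) →ₗ[F] F), LinearIndependent F Φ ∧ (∀ i, Φ i ∈ A) ∧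
      ∀ ψ ∈ A, ∃ c0 c1 : F, c0 • Φ 0 + c1 • Φ 1 = ψ := by
  haveI : Module.Free F A := Module.Free.of_divisionRing F A
  let b := Module.finBasisOfFinrankEq F A hA
  refine ⟨fun i => (b i : (Fin k → F) →ₗ[F] F),
    b.linearIndependent.map_of_injective_injectiveₛ id A.subtype.toAddMonoidHom Function.injective_id
      A.injective_subtype (fun _ _ => rfl), fun i => (b i).2, ?_⟩
  intro ψ hψ
  refine ⟨b.repr ⟨ψ, hψ⟩ 0, b.repr ⟨ψ, hψ⟩ 1, ?_⟩
  have h0 := b.sum_repr ⟨ψ, hψ⟩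
  rw [Fin.sum_univ_two] at h0
  have := congrArg A.subtype h0
  simpa [map_sum, Fin.sum_univ_two] using this

lemma secant_full {n k d s : ℕ} (G : Fin n → Fin k → F)
    (hk : 3 ≤ k) (hG : IsCodePS F n k d G) (hs : d + k + s = n + 1)
    (hmax : n + 2 = (s + 1) * (Fintype.card F + 1) + k)
    (φ : (Fin k → F) →ₗ[F] F) (hφ : φ ≠ 0)
    (hmany : k - 2 ≤ hypCount G φ) : hypCount G φ + d = n := by
  set q := Fintype.card F with hqdef
  have hq : 2 ≤ q := Fintype.one_lt_card
  have hn : k + 1 ≤ n := by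
    have h1 : q + 1 ≤ (s + 1) * (q + 1) := Nat.le_mul_of_pos_left _ (by omega)
    omega
  -- pick k-2 points on the hyperplane
  obtain ⟨u, hu, hucard⟩ := Finset.exists_subset_card_eq hmany
  -- extend to k-1 points
  obtain ⟨t, hut, -, htcard⟩ := Finset.exists_subsuperset_card_eq
    (Finset.subset_univ u) (by omega : u.card ≤ k - 1)
    (by simp; omega : k - 1 ≤ (Finset.univ : Finset (Fin n)).card)
  have hti := points_indep G hk hG hs hmax t htcard
  have hui : LinearIndependent F (fun i : u => G i) := by
    have hinj : Function.Injective (fun i : u => (⟨i.1, hut i.2⟩ : {x // x ∈ t})) :=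
      fun a b hab => Subtype.ext (by simpa using congrArg Subtype.val hab)
    exact hti.comp _ hinj
  set V := Submodule.span F (Set.range (fun i : u => G i)) with hV
  have hVrank : finrank F V = k - 2 := by
    have := linearIndependent_iff_card_eq_finrank_span.1 hui
    rw [Fintype.card_coe, hucard] at this
    exact this.symm
  have hann : finrank F V.dualAnnihilator = 2 := by
    have := ann_finrank V
    omega
  obtain ⟨Φ, hΦ, hmemΦ, hrepr⟩ := exists_basis_two V.dualAnnihilator hann
  -- φ is in the annihilator of V
  have hφmem : φ ∈ V.dualAnnihilator := by
    rw [Submodule.mem_dualAnnihilator]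
    intro w hw
    have hVker : V ≤ LinearMap.ker φ := by
      rw [hV, Submodule.span_le]
      rintro - ⟨i, rfl⟩
      have := hu i.2
      simp only [hypCount, Finset.mem_filter] at this
      exact this.2
    exact hVker hw
  obtain ⟨c0, c1, hrep⟩ := hrepr φ hφmem
  set p : F × F := (c0, c1) with hp
  have hpne : p ≠ 0 := by
    intro h
    apply hφ
    rw [← hrep]
    have h1 : c0 = 0 := congrArg Prod.fst h
    have h2 : c1 = 0 := congrArg Prod.snd h
    rw [h1, h2]; simp
  -- the filter of points on both kernels has cardinality exactly k - 2
  set a := (Finset.univ.filter fun i => Φ 0 (G i) = 0 ∧ Φ 1 (G i) = 0).card with ha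
  have haub : a ≤ k - 2 := pencil_card_le G hk hG hs hmax Φ hΦ
  have halb : k - 2 ≤ a := by
    rw [← hucard]
    apply Finset.card_le_card
    intro i hi
    have hGi : G i ∈ V := Submodule.subset_span ⟨⟨i, hi⟩, rfl⟩
    simp only [Finset.mem_filter, Finset.mem_univ, true_and]
    exact ⟨(Submodule.mem_dualAnnihilator _).1 (hmemΦ 0) _ hGi,
      (Submodule.mem_dualAnnihilator _).1 (hmemΦ 1) _ hGi⟩
  have haeq : a = k - 2 := le_antisymm haub halb
  -- total of the pencil sum
  have hsum : ∑ p' ∈ (Finset.univ : Finset (F × F)).erase 0,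
      hypCount G (p'.1 • Φ 0 + p'.2 • Φ 1) = (q * q - 1) * (n - d) := by
    rw [pencil_sum, ← ha, haeq]
    simp only [← hqdef]
    have hd : d ≤ n := by omega
    have h1 : 1 ≤ q * q := Nat.one_le_iff_ne_zero.2 (Nat.mul_ne_zero (by omega) (by omega))
    zify [hd, hq, h1, (by omega : 1 ≤ q), (by omega : 2 ≤ k), (by omega : k - 2 ≤ n)]
    have hndZ : (n : ℤ) - d = k + s - 1 := by
      have : (d : ℤ) + k + s = n + 1 := by exact_mod_cast hs
      linarith
    have hmaxZ : (n : ℤ) + 2 = (s + 1) * (q + 1) + k := by exact_mod_cast hmax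
    have hkZ : (3 : ℤ) ≤ k := by exact_mod_cast hk
    rw [hndZ]
    have hnk : (n : ℤ) - (k - 2) = (s + 1) * (q + 1) := by linarith
    rw [hnk]
    ring
  -- all terms are at most n - d, and the term at p equals hypCount G φ
  by_contra hne
  have hlt : hypCount G φ + d < n := lt_of_le_of_ne (hG.2.2.2.1 φ hφ) hne
  have hcard : ((Finset.univ : Finset (F × F)).erase 0).card = q * q - 1 := by
    rw [Finset.card_erase_of_mem (Finset.mem_univ _), Finset.card_univ, Fintype.card_prod]
  have hstrict : ∑ p' ∈ (Finset.univ : Finset (F × F)).erase 0,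
      hypCount G (p'.1 • Φ 0 + p'.2 • Φ 1)
      < ∑ _p' ∈ (Finset.univ : Finset (F × F)).erase 0, (n - d) := by
    apply Finset.sum_lt_sum
    · intro p' hp'
      have := hG.2.2.2.1 _ (nonzero_comb hΦ (Finset.ne_of_mem_erase hp'))
      omega
    · refine ⟨p, Finset.mem_erase.2 ⟨hpne, Finset.mem_univ _⟩, ?_⟩
      rw [show p.1 • Φ 0 + p.2 • Φ 1 = φ from hrep]
      omega
  rw [hsum, Finset.sum_const, hcard, smul_eq_mul] at hstrict
  exact lt_irrefl _ hstrict

end Aux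

section Main

open Module

/-- Let `k ≥ 3` and let `G` be an `[n,k,d]_q` A^sMDS code of maximal length
`n = (s+1)(q+1) + k - 2`. Then for each `0 ≤ j ≤ k - 2` the quantity
`γ_j = C(n-j, k-1-j) / C(n-d-j, k-1-j)` is an integer. -/
theorem length_maximal_integrality (F : Type*) [Field F] [Fintype F] [DecidableEq F]
    (n k d s : ℕ) (G : Fin n → Fin k → F)
    (hk : 3 ≤ k) (hG : IsCodePS F n k d G) (hs : d + k + s = n + 1)
    (hmax : n + 2 = (s + 1) * (Fintype.card F + 1) + k) :
    ∀ j : ℕ, j ≤ k - 2 →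
      Nat.choose (n - d - j) (k - 1 - j) ∣ Nat.choose (n - j) (k - 1 - j) := by
  intro j hj
  classical
  have hq : 2 ≤ Fintype.card F := Fintype.one_lt_card
  have hn : k + 1 ≤ n := by
    have h1 : Fintype.card F + 1 ≤ (s + 1) * (Fintype.card F + 1) :=
      Nat.le_mul_of_pos_left _ (by omega)
    omega
  obtain ⟨J, -, hJcard⟩ := Finset.exists_subset_card_eq
    (show j ≤ (Finset.univ : Finset (Fin n)).card by
      rw [Finset.card_univ, Fintype.card_fin]; omega)
  set f : Finset (Fin n) → Submodule F (Fin k → F) :=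
    fun T => Submodule.span F (Set.range (fun i : (J ∪ T : Finset (Fin n)) => G i)) with hf
  have fmem : ∀ (T : Finset (Fin n)) (i : Fin n), i ∈ J ∪ T → G i ∈ f T :=
    fun T i hi => Submodule.subset_span ⟨⟨i, hi⟩, rfl⟩
  have franks : ∀ T : Finset (Fin n), (J ∪ T).card = k - 1 → finrank F (f T) = k - 1 := by
    intro T hT
    have h2 := linearIndependent_iff_card_eq_finrank_span.1
      (points_indep G hk hG hs hmax (J ∪ T) hT)
    rw [Fintype.card_coe, hT] at h2
    exact h2.symm
  set 𝒮 := (Finset.univ \ J).powersetCard (k - 1 - j) with hS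
  have hScard : 𝒮.card = (n - j).choose (k - 1 - j) := by
    rw [hS, Finset.card_powersetCard, Finset.card_sdiff_of_subset (Finset.subset_univ J),
      Finset.card_univ, Fintype.card_fin, hJcard]
  have hsplit := Finset.card_eq_sum_card_fiberwise
    (fun T (hT : T ∈ 𝒮) => Finset.mem_image_of_mem f hT)
  -- each fiber has cardinality (n - d - j).choose (k - 1 - j)
  have hfib : ∀ H ∈ 𝒮.image f, (𝒮.filter fun T => f T = H).card
      = (n - d - j).choose (k - 1 - j) := by
    intro H hH
    obtain ⟨T₀, hT₀S, rfl⟩ := Finset.mem_image.1 hH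
    obtain ⟨hT₀sub, hT₀card⟩ := Finset.mem_powersetCard.1 hT₀S
    have hdisj0 : Disjoint J T₀ := by
      rw [Finset.disjoint_right]
      intro i hi
      exact (Finset.mem_sdiff.1 (hT₀sub hi)).2
    have htc : (J ∪ T₀).card = k - 1 := by
      rw [Finset.card_union_of_disjoint hdisj0, hJcard, hT₀card]; omega
    -- a linear form cutting out the hyperplane f T₀
    have hann1 : finrank F (f T₀).dualAnnihilator = 1 := by
      have h1 := ann_finrank (f T₀)
      rw [franks T₀ htc] at h1
      omega
    obtain ⟨φ, hφmem, hφne⟩ := Submodule.exists_mem_ne_zero_of_ne_bot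
      (p := (f T₀).dualAnnihilator) (by
        intro h
        rw [h, finrank_bot] at hann1
        omega)
    have hker : f T₀ ≤ LinearMap.ker φ := fun w hw =>
      LinearMap.mem_ker.2 ((Submodule.mem_dualAnnihilator φ).1 hφmem w hw)
    have hrange : LinearMap.range φ = ⊤ := by
      obtain ⟨x, hx⟩ : ∃ x, φ x ≠ 0 := by
        by_contra h
        push_neg at h
        exact hφne (LinearMap.ext fun x => h x)
      rw [eq_top_iff]
      intro c _
      exact ⟨(c * (φ x)⁻¹) • x, by rw [map_smul, smul_eq_mul, inv_mul_cancel_right₀ hx]⟩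
    have hkerrank : finrank F (LinearMap.ker φ) = k - 1 := by
      have h1 := LinearMap.finrank_range_add_finrank_ker φ
      rw [hrange, finrank_top, Module.finrank_self, Module.finrank_fin_fun] at h1
      omega
    have hHker : f T₀ = LinearMap.ker φ :=
      Submodule.eq_of_le_of_finrank_le hker (by rw [hkerrank, franks T₀ htc])
    -- the hyperplane is a secant
    have hmany : k - 2 ≤ hypCount G φ := by
      have hsub : J ∪ T₀ ⊆ Finset.univ.filter fun i => φ (G i) = 0 := by
        intro i hi
        simp only [Finset.mem_filter, Finset.mem_univ, true_and]
        exact hker (fmem T₀ i hi)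
      have := Finset.card_le_card hsub
      rw [htc] at this
      calc k - 2 ≤ k - 1 := by omega
        _ ≤ _ := this
    have hsec := secant_full G hk hG hs hmax φ hφne hmany
    have hJfil : J ⊆ Finset.univ.filter fun i => φ (G i) = 0 := by
      intro i hi
      simp only [Finset.mem_filter, Finset.mem_univ, true_and]
      exact hker (fmem T₀ i (Finset.mem_union_left _ hi))
    -- identify the fiber
    have hfiber : 𝒮.filter (fun T => f T = f T₀)
        = ((Finset.univ.filter fun i => φ (G i) = 0) \ J).powersetCard (k - 1 - j) := by
      ext T
      simp only [Finset.mem_filter, hS, Finset.mem_powersetCard]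
      constructor
      · rintro ⟨⟨hTsub, hTcard⟩, hfT⟩
        refine ⟨fun i hi => ?_, hTcard⟩
        rw [Finset.mem_sdiff]
        refine ⟨?_, (Finset.mem_sdiff.1 (hTsub hi)).2⟩
        simp only [Finset.mem_filter, Finset.mem_univ, true_and]
        have : G i ∈ f T := fmem T i (Finset.mem_union_right _ hi)
        rw [hfT, hHker] at this
        exact this
      · rintro ⟨hTsub, hTcard⟩
        have hTnJ : ∀ i ∈ T, i ∉ J := fun i hi => (Finset.mem_sdiff.1 (hTsub hi)).2
        have hTuniv : T ⊆ Finset.univ \ J := fun i hi =>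
          Finset.mem_sdiff.2 ⟨Finset.mem_univ _, hTnJ i hi⟩
        refine ⟨⟨hTuniv, hTcard⟩, ?_⟩
        have hdT : Disjoint J T := by
          rw [Finset.disjoint_right]; exact hTnJ
        have hcardJT : (J ∪ T).card = k - 1 := by
          rw [Finset.card_union_of_disjoint hdT, hJcard, hTcard]; omega
        apply Submodule.eq_of_le_of_finrank_le
        · rw [hHker, hf]
          apply Submodule.span_le.2
          rintro - ⟨i, rfl⟩
          rcases Finset.mem_union.1 i.2 with hiJ | hiT
          · exact hker (fmem T₀ i (Finset.mem_union_left _ hiJ))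
          · have := hTsub hiT
            rw [Finset.mem_sdiff] at this
            simp only [Finset.mem_filter, Finset.mem_univ, true_and] at this
            exact LinearMap.mem_ker.2 this.1
        · rw [franks T hcardJT, franks T₀ htc]
    rw [hfiber, Finset.card_powersetCard, Finset.card_sdiff_of_subset hJfil]
    congr 2
    have : hypCount G φ = (Finset.univ.filter fun i => φ (G i) = 0).card := rfl
    omega
  rw [Finset.sum_congr rfl hfib, Finset.sum_const, smul_eq_mul] at hsplit
  exact ⟨(𝒮.image f).card, by rw [← hScard, hsplit, mul_comm]⟩

end Main
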